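/- Let Y ∈ ℝⁿ, W₁ ∈ ℝ^{n×q}, W₂ ∈ ℝ^{n×L}, and W = [W₁ W₂]. Assume WᵀW, W₁ᵀW₁ and W̃₂ᵀW̃₂ are invertible and that σ̂²(W) > 0, and let γ̂₂ = (W̃₂ᵀW̃₂)⁻¹W̃₂ᵀỸ. Then σ̂²(W₁)/σ̂²(W) ≥ 1 + (n⁻¹YᵀY)⁻¹ · γ̂₂ᵀ(n⁻¹W̃₂ᵀW̃₂)γ̂₂ (inequality (e507) used in the proof of Theorem 2(i)). -/

import Mathlib

open Matrix

/-- Variance estimate from OLS with design `W`. -/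
noncomputable def sigmaHat {n : ℕ} {d : Type*} [Fintype d] [DecidableEq d]
    (Y : Fin n → ℝ) (W : Matrix (Fin n) d ℝ) : ℝ :=
  (1 / (n : ℝ)) * (Y ⬝ᵥ Y - Y ⬝ᵥ ((W * (Wᵀ * W)⁻¹ * Wᵀ) *ᵥ Y))

private lemma dp_self_nonneg {m : Type*} [Fintype m] (u : m → ℝ) : 0 ≤ u ⬝ᵥ u :=
  Finset.sum_nonneg fun _ _ => mul_self_nonneg _

private lemma dp_sandwich {k m : Type*} [Fintype k] [Fintype m]
    (X : Matrix k m ℝ) (M : Matrix m m ℝ) (Y : k → ℝ) :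
    Y ⬝ᵥ ((X * M * Xᵀ) *ᵥ Y) = (Xᵀ *ᵥ Y) ⬝ᵥ (M *ᵥ (Xᵀ *ᵥ Y)) := by
  rw [← Matrix.mulVec_mulVec, ← Matrix.mulVec_mulVec, Matrix.dotProduct_mulVec,
    ← Matrix.mulVec_transpose]

private lemma quad_eq {k m : Type*} [Fintype k] [Fintype m]
    (X : Matrix k m ℝ) (w : m → ℝ) :
    ((Xᵀ * X) *ᵥ w) ⬝ᵥ w = (X *ᵥ w) ⬝ᵥ (X *ᵥ w) := by
  rw [← Matrix.mulVec_mulVec, dotProduct_comm, Matrix.dotProduct_mulVec,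
    Matrix.vecMul_transpose]

private lemma quad_inv_nonneg {k m : Type*} [Fintype k] [Fintype m] [DecidableEq m]
    (X : Matrix k m ℝ) (v : m → ℝ) (h : IsUnit (Xᵀ * X).det) :
    0 ≤ v ⬝ᵥ ((Xᵀ * X)⁻¹ *ᵥ v) := by
  set w := (Xᵀ * X)⁻¹ *ᵥ v with hw
  have hv : v = (Xᵀ * X) *ᵥ w := by
    rw [hw, Matrix.mulVec_mulVec, Matrix.mul_nonsing_inv _ h, Matrix.one_mulVec]
  calc (0:ℝ) ≤ (X *ᵥ w) ⬝ᵥ (X *ᵥ w) := dp_self_nonneg _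
    _ = ((Xᵀ * X) *ᵥ w) ⬝ᵥ w := (quad_eq X w).symm
    _ = v ⬝ᵥ w := by rw [← hv]

/-- Inequality (e507) used in the proof of Theorem 2(i). -/
theorem stmt4 (n q L : ℕ) (Y : Fin n → ℝ)
    (W₁ : Matrix (Fin n) (Fin q) ℝ) (W₂ : Matrix (Fin n) (Fin L) ℝ)
    (W : Matrix (Fin n) (Fin q ⊕ Fin L) ℝ) (hW : W = fromCols W₁ W₂)
    (hWtW : IsUnit (Wᵀ * W)) (hW1 : IsUnit (W₁ᵀ * W₁))
    (Wt₂ : Matrix (Fin n) (Fin L) ℝ)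
    (hWt₂ : Wt₂ = W₂ - W₁ * (W₁ᵀ * W₁)⁻¹ * W₁ᵀ * W₂)
    (hWt₂u : IsUnit (Wt₂ᵀ * Wt₂))
    (hσ : 0 < sigmaHat Y W)
    (Yt : Fin n → ℝ) (hYt : Yt = Y - (W₁ * (W₁ᵀ * W₁)⁻¹ * W₁ᵀ) *ᵥ Y)
    (γ₂ : Fin L → ℝ) (hγ₂ : γ₂ = (Wt₂ᵀ * Wt₂)⁻¹ *ᵥ (Wt₂ᵀ *ᵥ Yt)) :
    sigmaHat Y W₁ / sigmaHat Y W
      ≥ 1 + ((1 / (n : ℝ)) * (Y ⬝ᵥ Y))⁻¹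
            * (γ₂ ⬝ᵥ (((1 / (n : ℝ)) • (Wt₂ᵀ * Wt₂)) *ᵥ γ₂)) := by
  have hAd : IsUnit (W₁ᵀ * W₁).det := (Matrix.isUnit_iff_isUnit_det _).1 hW1
  have hDd : IsUnit (Wt₂ᵀ * Wt₂).det := (Matrix.isUnit_iff_isUnit_det _).1 hWt₂u
  set A := W₁ᵀ * W₁ with hAdef
  set D := Wt₂ᵀ * Wt₂ with hDdef
  have hAA : A * A⁻¹ = 1 := Matrix.mul_nonsing_inv _ hAd
  have hDD : D * D⁻¹ = 1 := Matrix.mul_nonsing_inv _ hDd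
  -- orthogonality
  have horth : W₁ᵀ * Wt₂ = 0 := by
    rw [hWt₂, Matrix.mul_sub]
    have h1 : W₁ᵀ * (W₁ * A⁻¹ * W₁ᵀ * W₂) = W₁ᵀ * W₂ := by
      simp only [← Matrix.mul_assoc]
      rw [← hAdef, hAA, Matrix.one_mul]
    rw [h1, sub_self]
  have horth' : Wt₂ᵀ * W₁ = 0 := by
    have h := congrArg Matrix.transpose horth
    simpa [Matrix.transpose_mul] using h
  -- the triangular transfer matrices
  set C := A⁻¹ * (W₁ᵀ * W₂) with hCdef
  set T : Matrix (Fin q ⊕ Fin L) (Fin q ⊕ Fin L) ℝ := fromBlocks 1 (-C) 0 1 with hTdef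
  set Ti : Matrix (Fin q ⊕ Fin L) (Fin q ⊕ Fin L) ℝ := fromBlocks 1 C 0 1 with hTidef
  have hTTi : T * Ti = 1 := by
    rw [hTdef, hTidef, Matrix.fromBlocks_multiply]
    simpa using Matrix.fromBlocks_one
  have hTiT : Ti * T = 1 := by
    rw [hTdef, hTidef, Matrix.fromBlocks_multiply]
    simpa using Matrix.fromBlocks_one
  set V : Matrix (Fin n) (Fin q ⊕ Fin L) ℝ := fromCols W₁ Wt₂ with hVdef
  have hV : W * T = V := by
    rw [hW, hTdef, Matrix.fromCols_mul_fromBlocks, hVdef]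
    have h1 : W₁ * (1 : Matrix (Fin q) (Fin q) ℝ) + W₂ * (0 : Matrix (Fin L) (Fin q) ℝ)
        = W₁ := by simp
    have h2 : W₁ * (-C) + W₂ * (1 : Matrix (Fin L) (Fin L) ℝ) = Wt₂ := by
      rw [hWt₂, hCdef]
      simp only [Matrix.mul_one, Matrix.mul_neg, ← Matrix.mul_assoc]
      abel
    rw [h1, h2]
  have hVtV : Vᵀ * V = fromBlocks A 0 0 D := by
    rw [hVdef, Matrix.transpose_fromCols, Matrix.fromRows_mul_fromCols,
      horth, horth', hAdef, hDdef]
  have hinvVtV : (Vᵀ * V)⁻¹ = fromBlocks A⁻¹ 0 0 D⁻¹ := by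
    rw [hVtV]
    apply Matrix.inv_eq_right_inv
    rw [Matrix.fromBlocks_multiply]
    simpa [hAA, hDD] using Matrix.fromBlocks_one
  have hWtW_eq : Wᵀ * W = Tiᵀ * (Vᵀ * V) * Ti := by
    calc Wᵀ * W = (T * Ti)ᵀ * (Wᵀ * W) * (T * Ti) := by rw [hTTi]; simp
      _ = Tiᵀ * ((W * T)ᵀ * (W * T)) * Ti := by
          simp only [Matrix.transpose_mul, Matrix.mul_assoc]
      _ = Tiᵀ * (Vᵀ * V) * Ti := by rw [hV]
  have hTiinv : Ti⁻¹ = T := Matrix.inv_eq_right_inv hTiT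
  have hWtWinv : (Wᵀ * W)⁻¹ = T * ((Vᵀ * V)⁻¹ * Tᵀ) := by
    rw [hWtW_eq, Matrix.mul_inv_rev, Matrix.mul_inv_rev, hTiinv,
      ← Matrix.transpose_nonsing_inv, hTiinv]
  have hproj : W * (Wᵀ * W)⁻¹ * Wᵀ = W₁ * A⁻¹ * W₁ᵀ + Wt₂ * D⁻¹ * Wt₂ᵀ := by
    have hVt : Tᵀ * Wᵀ = Vᵀ := by rw [← Matrix.transpose_mul, hV]
    calc W * (Wᵀ * W)⁻¹ * Wᵀ = (W * T) * (Vᵀ * V)⁻¹ * (Tᵀ * Wᵀ) := by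
          rw [hWtWinv]; simp only [Matrix.mul_assoc]
      _ = V * (Vᵀ * V)⁻¹ * Vᵀ := by rw [hV, hVt]
      _ = W₁ * A⁻¹ * W₁ᵀ + Wt₂ * D⁻¹ * Wt₂ᵀ := by
          rw [hinvVtV, hVdef, Matrix.fromCols_mul_fromBlocks,
            Matrix.transpose_fromCols, Matrix.fromCols_mul_fromRows]
          simp [Matrix.mul_assoc]
  -- scalar quantities
  set v₂ : Fin L → ℝ := Wt₂ᵀ *ᵥ Y with hv₂
  have hYtv : Wt₂ᵀ *ᵥ Yt = v₂ := by
    rw [hYt, Matrix.mulVec_sub, Matrix.mulVec_mulVec, ← Matrix.mul_assoc,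
      ← Matrix.mul_assoc, horth']
    simp [hv₂]
  have hγ₂' : γ₂ = D⁻¹ *ᵥ v₂ := by rw [hγ₂, hYtv, hDdef]
  set p1 : ℝ := Y ⬝ᵥ ((W₁ * A⁻¹ * W₁ᵀ) *ᵥ Y) with hp1def
  set p2 : ℝ := v₂ ⬝ᵥ (D⁻¹ *ᵥ v₂) with hp2def
  have hp1 : 0 ≤ p1 := by
    rw [hp1def, dp_sandwich]
    exact quad_inv_nonneg W₁ (W₁ᵀ *ᵥ Y) hAd
  have hp2 : 0 ≤ p2 := quad_inv_nonneg Wt₂ v₂ hDd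
  have hPW : Y ⬝ᵥ ((W * (Wᵀ * W)⁻¹ * Wᵀ) *ᵥ Y) = p1 + p2 := by
    rw [hproj, Matrix.add_mulVec, dotProduct_add, dp_sandwich Wt₂, ← hv₂,
      ← hp1def, ← hp2def]
  have hDv : D *ᵥ (D⁻¹ *ᵥ v₂) = v₂ := by
    rw [Matrix.mulVec_mulVec, hDD, Matrix.one_mulVec]
  have hΔ : γ₂ ⬝ᵥ (D *ᵥ γ₂) = p2 := by
    rw [hγ₂', hDv, dotProduct_comm, ← hp2def]
  -- the smul form in the goal
  have hΔ' : γ₂ ⬝ᵥ (((1 / (n : ℝ)) • D) *ᵥ γ₂) = (1 / (n : ℝ)) * p2 := by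
    rw [Matrix.smul_mulVec, dotProduct_smul, hΔ, smul_eq_mul]
  -- final real arithmetic
  set c : ℝ := 1 / (n : ℝ) with hcdef
  have hc : 0 ≤ c := by positivity
  set s : ℝ := sigmaHat Y W with hsdef
  have hs1 : sigmaHat Y W₁ = s + c * p2 := by
    rw [hsdef]
    unfold sigmaHat
    rw [hPW, hp1def, ← hAdef, ← hcdef]
    ring
  have ht : c * (Y ⬝ᵥ Y) = s + c * p1 + c * p2 := by
    rw [hsdef]
    unfold sigmaHat
    rw [hPW, ← hcdef]
    ring
  rw [hs1, hΔ']
  have hst : s ≤ c * (Y ⬝ᵥ Y) := by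
    rw [ht]
    have : 0 ≤ c * p1 := mul_nonneg hc hp1
    have : 0 ≤ c * p2 := mul_nonneg hc hp2
    linarith
  have hcp2 : 0 ≤ c * p2 := mul_nonneg hc hp2
  have htpos : 0 < c * (Y ⬝ᵥ Y) := lt_of_lt_of_le hσ hst
  have hsne : s ≠ 0 := ne_of_gt hσ
  have hdiv : (s + c * p2) / s = 1 + (c * p2) / s := by
    field_simp
  rw [hdiv, ge_iff_le, add_le_add_iff_left]
  rw [div_eq_mul_inv, mul_comm]
  exact mul_le_mul_of_nonneg_left (inv_anti₀ hσ hst) hcp2
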